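/- Every 2-block of a finitely separable rayless graph is finite. -/

import Mathlib

namespace SimpleGraph

variable {V : Type*} (G : SimpleGraph V)

/-- The cut of `G` with side `X`: all edges with one end in `X` and the other
outside `X`. -/
def cutEdgeSet (X : Set V) : Set (Sym2 V) :=
  {e : Sym2 V | ∃ a b : V, G.Adj a b ∧ e = s(a, b) ∧ a ∈ X ∧ b ∉ X}

/-- `G` is finitely separable: any two distinct vertices are separated by a
finite cut. -/
def FinitelySeparable : Prop :=
  ∀ v w : V, v ≠ w → ∃ X : Set V, v ∈ X ∧ w ∉ X ∧ (G.cutEdgeSet X).Finite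

/-- The subgraph of `G` induced on `S` is connected. -/
def ConnectedOn (S : Set V) : Prop :=
  ∀ u ∈ S, ∀ v ∈ S,
    Relation.ReflTransGen (fun a b => a ∈ S ∧ b ∈ S ∧ G.Adj a b) u v

/-- `S` induces a 2-block of `G`: a maximal connected subgraph without a
cutvertex. -/
def IsTwoBlock (S : Set V) : Prop :=
  G.ConnectedOn S ∧ (∀ x ∈ S, G.ConnectedOn (S \ {x})) ∧
    ∀ T : Set V, S ⊆ T → G.ConnectedOn T →
      (∀ x ∈ T, G.ConnectedOn (T \ {x})) → T = S

/-- `G` contains no ray (one-way infinite path). -/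
def Rayless : Prop :=
  ¬ ∃ f : ℕ → V, Function.Injective f ∧ ∀ n : ℕ, G.Adj (f n) (f (n + 1))

end SimpleGraph

open Relation

namespace TwoBlockAux

variable {V : Type*} (G : SimpleGraph V)

/-- The edge relation of the induced subgraph on `A`. -/
def rel (A : Set V) (a b : V) : Prop := a ∈ A ∧ b ∈ A ∧ G.Adj a b

/-- The set of vertices reachable from `u` inside `A`. -/
def reach (A : Set V) (u : V) : Set V := {x | ReflTransGen (rel G A) u x}

lemma rel_symm (A : Set V) : Symmetric (rel G A) :=
  fun _ _ h => ⟨h.2.1, h.1, h.2.2.symm⟩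

lemma reach_subset {A : Set V} {u : V} (hu : u ∈ A) : reach G A u ⊆ A := by
  intro x hx
  induction hx with
  | refl => exact hu
  | tail _ h2 _ => exact h2.2.1

lemma reach_eq_of_mem {A : Set V} {u x : V} (hx : x ∈ reach G A u) :
    reach G A x = reach G A u := by
  ext y
  constructor
  · intro hy
    exact hx.trans hy
  · intro hy
    exact ((@ReflTransGen.stdSymm _ _ ⟨fun a b h => rel_symm G A h⟩).symm _ _ hx).trans hy

lemma chain_in_reach {A : Set V} {u x : V} (h : ReflTransGen (rel G A) u x) :
    ReflTransGen (rel G (reach G A u)) u x := by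
  induction h with
  | refl => exact ReflTransGen.refl
  | tail h1 h2 ih => exact ih.tail ⟨h1, h1.tail h2, h2.2.2⟩

lemma ne_of_restricted {r : V → V → Prop} {v w y : V}
    (h : ReflTransGen (fun a b => r a b ∧ a ≠ v ∧ b ≠ v) w y) (hw : w ≠ v) :
    y ≠ v := by
  induction h with
  | refl => exact hw
  | tail _ h2 _ => exact h2.2.2

lemma first_step {r : V → V → Prop} (hirr : ∀ a, ¬ r a a) {v x : V}
    (h : ReflTransGen r v x) :
    x = v ∨ ∃ w, r v w ∧ ReflTransGen (fun a b => r a b ∧ a ≠ v ∧ b ≠ v) w x := by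
  induction h with
  | refl => exact Or.inl rfl
  | @tail y x h1 h2 ih =>
    by_cases hx : x = v
    · exact Or.inl hx
    · right
      rcases ih with rfl | ⟨w, hw, hchain⟩
      · exact ⟨x, h2, ReflTransGen.refl⟩
      · have hwv : w ≠ v := fun h => hirr v (h ▸ hw)
        have hy : y ≠ v := ne_of_restricted hchain hwv
        exact ⟨w, hw, hchain.tail ⟨h2, hy, hx⟩⟩

lemma exists_cross {r : V → V → Prop} {X : Set V} {a b : V}
    (h : ReflTransGen r a b) (ha : a ∈ X) :
    b ∈ X ∨ ∃ p q, r p q ∧ p ∈ X ∧ q ∉ X := by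
  induction h with
  | refl => exact Or.inl ha
  | @tail y z h1 h2 ih =>
    rcases ih with hy | hcross
    · by_cases hz : z ∈ X
      · exact Or.inl hz
      · exact Or.inr ⟨y, z, h2, hy, hz⟩
    · exact Or.inr hcross

/-- A "star" with center `d`: infinitely many pairwise disjoint connected
pieces `P n`, each containing a neighbour `w n` of `d` and a marked vertex
`v n ∈ M`. -/
def Star (A M : Set V) : Prop :=
  ∃ d ∈ A, ∃ v w : ℕ → V, ∃ P : ℕ → Set V,
    (∀ n, v n ∈ M) ∧ (∀ n, v n ∈ P n) ∧ (∀ n, w n ∈ P n) ∧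
    (∀ n m, n ≠ m → Disjoint (P n) (P m)) ∧
    (∀ n, d ∉ P n) ∧ (∀ n, P n ⊆ A) ∧
    (∀ n, G.Adj d (w n)) ∧
    (∀ n, ReflTransGen (rel G (P n)) (w n) (v n))

/-- Invariant of the ray-building recursion: `p.1` is the current vertex,
`p.2` the (reversed) history. -/
def Inv (A M : Set V) (p : V × List V) : Prop :=
  p.1 ∉ p.2 ∧ p.2.Nodup ∧ (∀ x ∈ p.1 :: p.2, x ∈ A) ∧ List.Chain G.Adj p.1 p.2 ∧
    (M ∩ reach G (A \ {x | x ∈ p.2}) p.1).Infinite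

lemma step (A M : Set V) (hns : ¬ Star G A M) {p : V × List V}
    (hp : Inv G A M p) :
    ∃ h', Inv G A M (h', p.1 :: p.2) ∧ G.Adj p.1 h' := by
  classical
  obtain ⟨hnm, hnd, hall, hch, hinf⟩ := hp
  obtain ⟨h, t⟩ := p
  simp only at hnm hnd hall hch hinf ⊢
  set B : Set V := A \ {x | x ∈ t} with hB
  set B' : Set V := A \ {x | x ∈ h :: t} with hB'
  have hhB : h ∈ B := ⟨hall h List.mem_cons_self, hnm⟩
  have hB'eq : B' = B \ {h} := by
    ext x
    simp only [hB, hB', Set.mem_diff, Set.mem_setOf_eq, List.mem_cons,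
      Set.mem_singleton_iff]
    tauto
  by_cases hcase : ∃ w, rel G B h w ∧ (M ∩ reach G B' w).Infinite
  · obtain ⟨w, ⟨hwB1, hwB2, hwadj⟩, hwinf⟩ := hcase
    have hwt : w ∉ t := hwB2.2
    have hwh : w ≠ h := fun h' => G.irrefl (h' ▸ hwadj)
    refine ⟨w, ⟨?_, ?_, ?_, ?_, ?_⟩, hwadj⟩
    · simp only [List.mem_cons]
      tauto
    · exact List.nodup_cons.mpr ⟨hnm, hnd⟩
    · intro x hx
      rcases List.mem_cons.mp hx with rfl | hx
      · exact hwB2.1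
      · exact hall x hx
    · exact List.chain_cons.mpr ⟨hwadj.symm, hch⟩
    · exact hwinf
  · exfalso
    apply hns
    push_neg at hcase
    have hirr : ∀ a, ¬ rel G B a a := fun a ha => G.irrefl ha.2.2
    set Y : Set V := (M ∩ reach G B h) \ {h} with hY
    have hYinf : Y.Infinite := hinf.diff (Set.finite_singleton h)
    have hmemB' : ∀ {x : V}, x ∈ B → x ≠ h → x ∈ B' := by
      intro x hx hxh
      rw [hB'eq]
      exact ⟨hx, hxh⟩
    have hstep' : ∀ x : V, ∃ w, x ∈ Y →
        rel G B h w ∧ ReflTransGen (rel G B') w x := by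
      intro x
      by_cases hx : x ∈ Y
      · obtain ⟨⟨hxM, hxR⟩, hxh⟩ := hx
        rcases first_step hirr hxR with rfl | ⟨w, hw, hchain⟩
        · exact absurd rfl hxh
        · refine ⟨w, fun _ => ⟨hw, ReflTransGen.mono ?_ _ _ hchain⟩⟩
          rintro a b ⟨⟨haB, hbB, hadj⟩, hav, hbv⟩
          exact ⟨hmemB' haB hav, hmemB' hbB hbv, hadj⟩
      · exact ⟨h, fun h' => absurd h' hx⟩
    choose w hw using hstep'
    set cl : V → Set V := fun x => M ∩ reach G B' (w x) with hcl
    have hxcl : ∀ x ∈ Y, x ∈ cl x := fun x hx => ⟨hx.1.1, (hw x hx).2⟩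
    have hclfin : ∀ x ∈ Y, (cl x).Finite :=
      fun x hx => hcase (w x) (hw x hx).1
    have himg : (cl '' Y).Infinite := by
      intro hfin
      apply hYinf
      have hsub : Y ⊆ ⋃₀ (cl '' Y) := fun x hx => ⟨cl x, ⟨x, hx, rfl⟩, hxcl x hx⟩
      refine Set.Finite.subset (Set.Finite.sUnion hfin ?_) hsub
      rintro s ⟨x, hx, rfl⟩
      exact hclfin x hx
    let e := himg.natEmbedding
    have hx : ∀ n : ℕ, ∃ x, x ∈ Y ∧ cl x = (e n).1 := fun n => (e n).2
    choose x hxY hxcl2 using hx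
    have hclne : ∀ n m, n ≠ m → cl (x n) ≠ cl (x m) := by
      intro n m hnm' hEq
      exact hnm' (e.injective (Subtype.ext (by rw [← hxcl2 n, ← hxcl2 m, hEq])))
    have hwB' : ∀ n, w (x n) ∈ B' := by
      intro n
      have h' := (hw (x n) (hxY n)).1
      exact hmemB' h'.2.1 (fun hh => G.irrefl (hh ▸ h'.2.2))
    refine ⟨h, hhB.1, x, fun n => w (x n), fun n => reach G B' (w (x n)),
      ?_, ?_, ?_, ?_, ?_, ?_, ?_, ?_⟩
    · exact fun n => (hxY n).1.1
    · exact fun n => (hw (x n) (hxY n)).2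
    · exact fun n => ReflTransGen.refl
    · intro n m hnm'
      rw [Set.disjoint_left]
      intro z hzn hzm
      apply hclne n m hnm'
      have h1 : reach G B' (w (x n)) = reach G B' z :=
        (reach_eq_of_mem G hzn).symm
      have h2 : reach G B' (w (x m)) = reach G B' z :=
        (reach_eq_of_mem G hzm).symm
      show M ∩ reach G B' (w (x n)) = M ∩ reach G B' (w (x m))
      rw [h1, h2]
    · intro n hhn
      have : h ∈ B' := reach_subset G (hwB' n) hhn
      rw [hB'eq] at this
      exact this.2 rfl
    · intro n z hz
      have : z ∈ B' := reach_subset G (hwB' n) hz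
      exact this.1
    · exact fun n => (hw (x n) (hxY n)).1.2.2
    · exact fun n => chain_in_reach G (hw (x n) (hxY n)).2

lemma star_of_rayless (A M : Set V) (hray : G.Rayless) {u₀ : V} (hu : u₀ ∈ A)
    (hinf : (M ∩ reach G A u₀).Infinite) : Star G A M := by
  classical
  by_contra hns
  have h0 : Inv G A M (u₀, []) := by
    refine ⟨by simp, by simp, ?_, List.Chain.nil, ?_⟩
    · intro x hx
      simp only [List.mem_cons, List.not_mem_nil, or_false] at hx
      exact hx ▸ hu
    · have hAeq : A \ {x | x ∈ ([] : List V)} = A := by simp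
      rw [hAeq]
      exact hinf
  have key : ∀ p : V × List V, Inv G A M p →
      ∃ h', Inv G A M (h', p.1 :: p.2) ∧ G.Adj p.1 h' :=
    fun p hp => step G A M hns hp
  choose nxt hnxt hadj using key
  let g : ℕ → (p : V × List V) ×' Inv G A M p := fun n =>
    Nat.rec ⟨(u₀, []), h0⟩
      (fun _ q => ⟨(nxt q.1 q.2, q.1.1 :: q.1.2), hnxt q.1 q.2⟩) n
  have hgsucc : ∀ n, (g (n + 1)).1 = (nxt (g n).1 (g n).2, (g n).1.1 :: (g n).1.2) :=
    fun n => rfl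
  set v : ℕ → V := fun n => (g n).1.1 with hv
  have hvadj : ∀ n, G.Adj (v n) (v (n + 1)) := by
    intro n
    show G.Adj (g n).1.1 (g (n + 1)).1.1
    rw [hgsucc n]
    exact hadj (g n).1 (g n).2
  have hmemlist : ∀ n m, n < m → v n ∈ (g m).1.2 := by
    intro n m hnm
    induction m with
    | zero => omega
    | succ k ih =>
      rw [hgsucc k]
      rcases Nat.lt_succ_iff_lt_or_eq.mp hnm with h' | h'
      · exact List.mem_cons_of_mem _ (ih h')
      · exact h' ▸ List.mem_cons_self
  have hnotmem : ∀ m, v m ∉ (g m).1.2 := fun m => (g m).2.1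
  have hvinj : Function.Injective v := by
    intro n m hEq
    by_contra hne
    rcases Nat.lt_or_ge n m with h' | h'
    · exact hnotmem m (hEq ▸ hmemlist n m h')
    · have h'' : m < n := lt_of_le_of_ne h' (Ne.symm hne)
      exact hnotmem n (hEq ▸ hmemlist m n h'')
  exact hray ⟨v, hvinj, hvadj⟩

/-- The relation tracking the steps of a walk `d — P — c`. -/
def relW (d c : V) (P : Set V) (a b : V) : Prop :=
  G.Adj a b ∧ ((a ∈ P ∧ b ∈ P) ∨ (a = d ∧ b ∈ P) ∨ (a ∈ P ∧ b = c))

end TwoBlockAux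

open TwoBlockAux in
/-- Every 2-block of a finitely separable rayless graph is finite. -/
theorem twoBlock_finite_of_finitelySeparable_rayless {V : Type*}
    (G : SimpleGraph V) (hG : G.FinitelySeparable) (hray : G.Rayless)
    (S : Set V) (hS : G.IsTwoBlock S) :
    S.Finite := by
  classical
  by_contra hSfin
  have hSinf : S.Infinite := hSfin
  obtain ⟨h1, h2, -⟩ := hS
  obtain ⟨u₀, hu₀⟩ := hSinf.nonempty
  -- Step A: find a vertex `c` of infinite degree inside `S`.
  have hinf1 : (S ∩ reach G S u₀).Infinite := by
    refine Set.Infinite.mono (fun x hx => ⟨hx, ?_⟩) hSinf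
    exact h1 u₀ hu₀ x hx
  obtain ⟨c, hcS, v1, w1, P1, -, -, hw1P, hP1disj, -, hP1A, hadj1, -⟩ :=
    star_of_rayless G S S hray hu₀ hinf1
  set N : Set V := {x | x ∈ S ∧ G.Adj c x} with hN
  have hw1inj : Function.Injective w1 := by
    intro n m hEq
    by_contra hne
    exact Set.disjoint_left.mp (hP1disj n m hne) (hw1P n) (hEq ▸ hw1P m)
  have hNinf : N.Infinite :=
    Set.infinite_of_injective_forall_mem hw1inj
      (fun n => ⟨hP1A n (hw1P n), hadj1 n⟩)
  have hNsub : N ⊆ S \ {c} := by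
    rintro x ⟨hxS, hxadj⟩
    exact ⟨hxS, fun hxc => G.irrefl (by rwa [Set.mem_singleton_iff.mp hxc] at hxadj)⟩
  -- Step B: find a second branch vertex `d` with infinitely many disjoint paths to `c`.
  obtain ⟨u₁, hu₁⟩ := hNinf.nonempty
  have hc2 := h2 c hcS
  have hinf2 : (N ∩ reach G (S \ {c}) u₁).Infinite := by
    refine Set.Infinite.mono (fun x hx => ⟨hx, ?_⟩) hNinf
    exact hc2 u₁ (hNsub hu₁) x (hNsub hx)
  obtain ⟨d, hdA, v2, w2, P2, hv2N, hv2P, hw2P, hP2disj, hdP, hP2A, hadj2, hchain2⟩ :=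
    star_of_rayless G (S \ {c}) N hray (hNsub hu₁) hinf2
  have hdc : d ≠ c := fun h => hdA.2 (h ▸ rfl)
  obtain ⟨X, hdX, hcX, hcut⟩ := hG d c hdc
  -- For each `n` find a crossing edge of the walk `d — P2 n — c`.
  have hcross : ∀ n, ∃ p q, relW G d c (P2 n) p q ∧ p ∈ X ∧ q ∉ X := by
    intro n
    have hheadW : relW G d c (P2 n) d (w2 n) :=
      ⟨hadj2 n, Or.inr (Or.inl ⟨rfl, hw2P n⟩)⟩
    have hmidW : ReflTransGen (relW G d c (P2 n)) (w2 n) (v2 n) :=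
      ReflTransGen.mono (r := rel G (P2 n)) (p := relW G d c (P2 n)) (fun a b h => ⟨h.2.2, Or.inl ⟨h.1, h.2.1⟩⟩) _ _ (hchain2 n)
    have htailW : relW G d c (P2 n) (v2 n) c :=
      ⟨(hv2N n).2.symm, Or.inr (Or.inr ⟨hv2P n, rfl⟩)⟩
    have hfull : ReflTransGen (relW G d c (P2 n)) d c :=
      (ReflTransGen.head hheadW hmidW).tail htailW
    rcases exists_cross hfull hdX with hc' | hcross
    · exact absurd hc' hcX
    · exact hcross
  choose p q hpq hpX hqX using hcross
  have hmem : ∀ n, (s(p n, q n) : Sym2 V) ∈ G.cutEdgeSet X :=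
    fun n => ⟨p n, q n, (hpq n).1, rfl, hpX n, hqX n⟩
  have hinj : Function.Injective (fun n => (s(p n, q n) : Sym2 V)) := by
    intro n m hnm
    by_contra hne
    simp only [Sym2.eq, Sym2.rel_iff', Prod.mk.injEq, Prod.swap_prod_mk] at hnm
    rcases hnm with ⟨hp', hq'⟩ | ⟨hp', hq'⟩
    · have hdisj := hP2disj n m hne
      rcases (hpq n).2 with ⟨ha, hb⟩ | ⟨ha, hb⟩ | ⟨ha, hb⟩ <;>
        rcases (hpq m).2 with ⟨ha', hb'⟩ | ⟨ha', hb'⟩ | ⟨ha', hb'⟩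
      · exact Set.disjoint_left.mp hdisj ha (by rw [hp']; exact ha')
      · exact hdP n (by rw [← ha', ← hp']; exact ha)
      · exact Set.disjoint_left.mp hdisj ha (by rw [hp']; exact ha')
      · exact hdP m (by rw [← ha, hp']; exact ha')
      · exact Set.disjoint_left.mp hdisj hb (by rw [hq']; exact hb')
      · exact hdP m (by rw [← ha, hp']; exact ha')
      · exact Set.disjoint_left.mp hdisj ha (by rw [hp']; exact ha')
      · exact hdP n (by rw [← ha', ← hp']; exact ha)
      · exact Set.disjoint_left.mp hdisj ha (by rw [hp']; exact ha')
    · exact hqX m (by rw [← hp']; exact hpX n)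
  exact Set.infinite_of_injective_forall_mem hinj hmem hcut
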